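/- There is no composite number n that is a strong probable prime to every base a with gcd(a, n) = 1. That is, for every odd composite n > 1 there exists an integer a coprime to n such that, writing n - 1 = 2^s * d with d odd, a^d ≢ 1 (mod n) and a^(2^k * d) ≢ -1 (mod n) for all 0 ≤ k < s. -/

import Mathlib

/-- Binomial for square-zero elements: `(1+t)^m = 1 + m*t`. -/
lemma sq_zero_one_add_pow {R : Type*} [CommRing R] (t : R) (ht : t ^ 2 = 0) (m : ℕ) :
    (1 + t) ^ m = 1 + (m : R) * t := by
  induction m with
  | zero => simp
  | succ m ih =>
      rw [pow_succ, ih]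
      have : (1 + (m : R) * t) * (1 + t) = 1 + ((m : R) + 1) * t + (m : R) * t ^ 2 := by ring
      rw [this, ht]
      push_cast
      ring

/-- Decomposition of a composite number. -/
lemma comp_decomp (n : ℕ) (hn : 1 < n) (hcomp : ¬ n.Prime) :
    (∃ p e : ℕ, p.Prime ∧ 2 ≤ e ∧ n = p ^ e) ∨
    (∃ n1 n2 : ℕ, 1 < n1 ∧ 1 < n2 ∧ Nat.Coprime n1 n2 ∧ n = n1 * n2) := by
  have hn0 : n ≠ 0 := by omega
  set p := n.minFac with hp
  have hpp : p.Prime := Nat.minFac_prime (by omega)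
  set e := n.factorization p with he
  have hmul : p ^ e * (n / p ^ e) = n := Nat.ordProj_mul_ordCompl_eq_self n p
  have hcop : Nat.Coprime p (n / p ^ e) := Nat.coprime_ordCompl hpp hn0
  have hpe1 : 1 < p ^ e := by
    have hdvd : p ∣ n := n.minFac_dvd
    have he1 : 1 ≤ e := by
      rw [he]
      exact (Nat.Prime.factorization_pos_of_dvd hpp hn0 hdvd)
    calc 1 < p := hpp.one_lt
    _ ≤ p ^ e := Nat.le_self_pow (by omega) p
  rcases Nat.lt_or_ge 1 (n / p ^ e) with h2 | h2
  · right
    exact ⟨p ^ e, n / p ^ e, hpe1, h2, (Nat.Coprime.pow_left e hcop), hmul.symm⟩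
  · left
    have h1 : n / p ^ e = 1 := by
      have hne0 : n / p ^ e ≠ 0 := by
        intro h; rw [h, mul_zero] at hmul; omega
      exact Nat.le_antisymm h2 (Nat.one_le_iff_ne_zero.mpr hne0)
    have hne : n = p ^ e := by rw [← hmul, h1, mul_one]
    refine ⟨p, e, hpp, ?_, hne⟩
    by_contra h
    interval_cases e
    · simp at hne; omega
    · simp at hne; exact hcomp (hne ▸ hpp)

theorem stmt_1 (n : ℕ) (hodd : Odd n) (hn : 1 < n) (hcomp : ¬ n.Prime) :
    ∃ a : ℕ, Nat.Coprime a n ∧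
      ∀ s d : ℕ, n - 1 = 2 ^ s * d → Odd d →
        ¬ ((a : ZMod n) ^ d = 1 ∨
            ∃ k < s, (a : ZMod n) ^ (2 ^ k * d) = -1) := by
  rcases comp_decomp n hn hcomp with ⟨p, e, hpp, he2, hne⟩ | ⟨n1, n2, hn1, hn2, hcop, hmul⟩
  · -- prime power case: a = p^(e-1) + 1
    set a : ℕ := p ^ (e - 1) + 1 with ha
    set x : ZMod n := (a : ZMod n) with hx
    have hp2 : 2 ≤ p := hpp.two_le
    have hpow_lt : p ^ (e - 1) + 1 < p ^ e := by
      have h1 : 1 < p ^ (e - 1) := by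
        exact Nat.one_lt_pow (by omega) hpp.one_lt
      calc p ^ (e - 1) + 1 < p ^ (e - 1) * 2 := by omega
      _ ≤ p ^ (e - 1) * p := Nat.mul_le_mul_left _ hp2
      _ = p ^ (e - 1 + 1) := by rw [pow_succ]
      _ = p ^ e := by congr 1; omega
    haveI : NeZero n := ⟨by omega⟩
    haveI : Fact (1 < n) := ⟨hn⟩
    -- t := cast of p^(e-1), t^2 = 0
    have ht2 : ((p : ZMod n) ^ (e - 1)) ^ 2 = 0 := by
      have : (((p ^ (e - 1)) ^ 2 : ℕ) : ZMod n) = 0 := by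
        rw [ZMod.natCast_eq_zero_iff, hne, ← pow_mul]
        exact pow_dvd_pow p (by omega)
      push_cast at this
      exact this
    have hxt : x = 1 + (p : ZMod n) ^ (e - 1) := by
      rw [hx, ha]; push_cast; ring
    have hxp : x ^ p = 1 := by
      rw [hxt, sq_zero_one_add_pow _ ht2]
      have : (p : ZMod n) * (p : ZMod n) ^ (e - 1) = ((p ^ e : ℕ) : ZMod n) := by
        push_cast
        rw [← pow_succ']
        congr 1
        omega
      rw [this, ← hne, ZMod.natCast_self, add_zero]
    have hx1 : x ≠ 1 := by
      intro h
      have hval : x.val = a := by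
        rw [hx]; exact ZMod.val_cast_of_lt (by omega)
      rw [h, ZMod.val_one n] at hval
      have : 1 < p ^ (e - 1) := by
        exact Nat.one_lt_pow (by omega) hpp.one_lt
      omega
    have hord : orderOf x = p := by
      have hdvd : orderOf x ∣ p := orderOf_dvd_of_pow_eq_one hxp
      rcases (Nat.Prime.eq_one_or_self_of_dvd hpp _ hdvd) with h | h
      · exact absurd (orderOf_eq_one_iff.mp h) hx1
      · exact h
    have hpnd : ¬ (p ∣ n - 1) := by
      intro h
      have hpn : p ∣ n := by
        rw [hne]; exact dvd_pow_self p (by omega)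
      have := Nat.dvd_sub hpn h
      have : p ∣ 1 := by
        have hh : n - (n - 1) = 1 := by omega
        rwa [hh] at this
      rw [Nat.dvd_one] at this
      omega
    refine ⟨a, ?_, ?_⟩
    · rw [← ZMod.isUnit_iff_coprime]
      refine IsUnit.of_mul_eq_one (a := x) (x ^ (p - 1)) ?_
      rw [← pow_succ']
      have : p - 1 + 1 = p := by omega
      rw [this, hxp]
    · rintro s d hsd hd (h1 | ⟨k, hk, hk1⟩)
      · have : x ^ (n - 1) = 1 := by
          rw [hsd, pow_mul', h1, one_pow]
        have := orderOf_dvd_of_pow_eq_one this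
        rw [hord] at this
        exact hpnd this
      · have h2 : x ^ (2 ^ (k + 1) * d) = 1 := by
          have : (2:ℕ) ^ (k + 1) * d = 2 ^ k * d * 2 := by ring
          rw [this, pow_mul, hk1]
          ring
        have hdvd2 : (2:ℕ) ^ (k + 1) * d ∣ n - 1 := by
          rw [hsd]
          exact Nat.mul_dvd_mul_right (pow_dvd_pow 2 (by omega)) d
        have : x ^ (n - 1) = 1 := by
          obtain ⟨c, hc⟩ := hdvd2
          rw [hc, pow_mul, h2, one_pow]
        have := orderOf_dvd_of_pow_eq_one this
        rw [hord] at this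
        exact hpnd this
  · -- two coprime factors case
    have hodd1 : Odd n1 := by
      rcases Nat.even_or_odd n1 with h | h
      · exfalso
        have : Even n := by rw [hmul]; exact h.mul_right n2
        exact (Nat.not_odd_iff_even.mpr this) hodd
      · exact h
    have hodd2 : Odd n2 := by
      rcases Nat.even_or_odd n2 with h | h
      · exfalso
        have : Even n := by rw [hmul]; exact h.mul_left n1
        exact (Nat.not_odd_iff_even.mpr this) hodd
      · exact h
    have h2n1 : 2 < n1 := by
      rcases hodd1 with ⟨m, hm⟩; omega
    have h2n2 : 2 < n2 := by
      rcases hodd2 with ⟨m, hm⟩; omega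
    haveI : Fact (2 < n1) := ⟨h2n1⟩
    haveI : Fact (2 < n2) := ⟨h2n2⟩
    haveI : NeZero n1 := ⟨by omega⟩
    haveI : NeZero n2 := ⟨by omega⟩
    obtain ⟨a, ha1, ha2⟩ := Nat.chineseRemainder hcop (n1 - 1) 1
    have hcast1 : (a : ZMod n1) = -1 := by
      have h := (ZMod.natCast_eq_natCast_iff a (n1 - 1) n1).mpr ha1
      rw [h, Nat.cast_sub (by omega : 1 ≤ n1), ZMod.natCast_self, Nat.cast_one, zero_sub]
    have hcast2 : (a : ZMod n2) = 1 := by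
      have h := (ZMod.natCast_eq_natCast_iff a 1 n2).mpr ha2
      rwa [Nat.cast_one] at h
    have hd1 : n1 ∣ n := ⟨n2, hmul⟩
    have hd2 : n2 ∣ n := ⟨n1, by rw [hmul, mul_comm]⟩
    refine ⟨a, ?_, ?_⟩
    · rw [hmul]
      refine Nat.Coprime.mul_right ?_ ?_
      · rw [← ZMod.isUnit_iff_coprime, hcast1]
        exact isUnit_one.neg
      · rw [← ZMod.isUnit_iff_coprime, hcast2]
        exact isUnit_one
    · rintro s d hsd hd (h1 | ⟨k, hk, hk1⟩)
      · have := congrArg (ZMod.castHom hd1 (ZMod n1)) h1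
        rw [map_pow, map_one, map_natCast, hcast1, hd.neg_one_pow] at this
        exact ZMod.neg_one_ne_one this
      · have := congrArg (ZMod.castHom hd2 (ZMod n2)) hk1
        rw [map_pow, map_natCast, hcast2, one_pow, map_neg, map_one] at this
        exact ZMod.neg_one_ne_one this.symm
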